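/- Let m ∈ ℕ and let p(x) = Σ_{k=-m}^{m} a_k e^{ikx} be a trigonometric polynomial of degree exactly m (so a_{-m} ≠ 0 or a_m ≠ 0). Then the function u ↦ (1/m) Σ_{j=1}^{m} p(2πj/m + u) is not constant; in fact it equals a₀ + a_{-m} e^{-imu} + a_m e^{imu}. -/

import Mathlib

open Complex

lemma geom_aux (m : ℕ) (hm : 1 ≤ m) (k : ℤ) :
    ∑ j ∈ Finset.Icc 1 m, Complex.exp (2 * Real.pi * Complex.I * k * j / m) =
      if (m : ℤ) ∣ k then (m : ℂ) else 0 := by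
  have hm0 : (m : ℂ) ≠ 0 := Nat.cast_ne_zero.mpr (by omega)
  have h2 : (2 : ℂ) * Real.pi * Complex.I ≠ 0 := by
    simp [Real.pi_ne_zero, Complex.I_ne_zero, Complex.ofReal_ne_zero]
  set z : ℂ := Complex.exp (2 * Real.pi * Complex.I * k / m) with hz
  have hterm : ∀ j : ℕ, Complex.exp (2 * Real.pi * Complex.I * k * j / m) = z ^ j := by
    intro j
    rw [hz, ← Complex.exp_nat_mul]
    ring_nf
  by_cases hd : (m : ℤ) ∣ k
  · rw [if_pos hd]
    obtain ⟨t, ht⟩ := hd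
    have hz1 : z = 1 := by
      rw [hz]
      have hk : (k : ℂ) = (m : ℂ) * t := by exact_mod_cast congrArg (Int.cast : ℤ → ℂ) ht
      have : (2 : ℂ) * Real.pi * Complex.I * k / m = t * (2 * Real.pi * Complex.I) := by
        rw [hk]; field_simp
      rw [this, Complex.exp_int_mul_two_pi_mul_I]
    simp [hterm, hz1]
  · rw [if_neg hd]
    have hz1 : z ≠ 1 := by
      intro h
      rw [hz, Complex.exp_eq_one_iff] at h
      obtain ⟨n, hn⟩ := h
      rw [div_eq_iff hm0] at hn
      apply hd
      refine ⟨n, ?_⟩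
      rw [mul_comm]
      have hc : (k : ℂ) = (n : ℂ) * m :=
        mul_left_cancel₀ h2 (by linear_combination hn)
      exact_mod_cast hc
    have hzm : z ^ m = 1 := by
      rw [hz, ← Complex.exp_nat_mul]
      have : (m : ℂ) * (2 * Real.pi * Complex.I * k / m) = k * (2 * Real.pi * Complex.I) := by
        field_simp
      rw [this, Complex.exp_int_mul_two_pi_mul_I]
    have hsum : ∑ j ∈ Finset.range m, z ^ j = 0 := by
      rw [geom_sum_eq hz1, hzm]
      simp
    simp only [hterm]
    rw [← Finset.Ico_add_one_right_eq_Icc, Finset.sum_Ico_eq_sum_range]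
    calc ∑ j ∈ Finset.range (m + 1 - 1), z ^ (1 + j)
        = z * ∑ j ∈ Finset.range m, z ^ j := by
          simp only [Nat.add_sub_cancel, Finset.mul_sum]
          exact Finset.sum_congr rfl fun j _ => by rw [pow_add]; ring
      _ = 0 := by rw [hsum, mul_zero]

lemma key_aux (m : ℕ) (hm : 1 ≤ m) (a : ℤ → ℂ) (p : ℝ → ℂ)
    (hp : ∀ x : ℝ, p x = ∑ k ∈ Finset.Icc (-(m : ℤ)) (m : ℤ),
      a k * Complex.exp (Complex.I * (k : ℂ) * (x : ℂ))) (u : ℝ) :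
    ((m : ℂ))⁻¹ * ∑ j ∈ Finset.Icc 1 m, p (2 * Real.pi * (j : ℝ) / (m : ℝ) + u) =
        a 0 + a (-(m : ℤ)) * Complex.exp (-(Complex.I * (m : ℂ) * (u : ℂ))) +
          a (m : ℤ) * Complex.exp (Complex.I * (m : ℂ) * (u : ℂ)) := by
  have hm0 : (m : ℂ) ≠ 0 := Nat.cast_ne_zero.mpr (by omega)
  have hmZ : (0 : ℤ) < m := by exact_mod_cast hm
  have step1 : ∑ j ∈ Finset.Icc 1 m, p (2 * Real.pi * (j : ℝ) / (m : ℝ) + u) =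
      ∑ k ∈ Finset.Icc (-(m : ℤ)) (m : ℤ),
        a k * Complex.exp (Complex.I * (k : ℂ) * (u : ℂ)) *
          (if (m : ℤ) ∣ k then (m : ℂ) else 0) := by
    simp only [hp]
    rw [Finset.sum_comm]
    refine Finset.sum_congr rfl fun k _ => ?_
    rw [← geom_aux m hm k, Finset.mul_sum]
    refine Finset.sum_congr rfl fun j _ => ?_
    have hexp : Complex.exp (Complex.I * (k : ℂ) * ((2 * Real.pi * (j : ℝ) / (m : ℝ) + u : ℝ) : ℂ)) =
        Complex.exp (Complex.I * (k : ℂ) * (u : ℂ)) *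
          Complex.exp (2 * Real.pi * Complex.I * k * j / m) := by
      rw [← Complex.exp_add]
      congr 1
      push_cast
      field_simp
      ring
    rw [hexp]
    ring
  have hsub : ({-(m : ℤ), 0, (m : ℤ)} : Finset ℤ) ⊆ Finset.Icc (-(m : ℤ)) (m : ℤ) := by
    intro k hk
    simp only [Finset.mem_insert, Finset.mem_singleton] at hk
    rcases hk with rfl | rfl | rfl <;> simp [Finset.mem_Icc]
  have hzero : ∀ k ∈ Finset.Icc (-(m : ℤ)) (m : ℤ),
      k ∉ ({-(m : ℤ), 0, (m : ℤ)} : Finset ℤ) →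
      a k * Complex.exp (Complex.I * (k : ℂ) * (u : ℂ)) *
        (if (m : ℤ) ∣ k then (m : ℂ) else 0) = 0 := by
    intro k hk hk'
    simp only [Finset.mem_Icc] at hk
    simp only [Finset.mem_insert, Finset.mem_singleton, not_or] at hk'
    have hnd : ¬ ((m : ℤ) ∣ k) := by
      rintro ⟨t, rfl⟩
      have ht1 : t ≤ 1 := by nlinarith [hk.2]
      have ht2 : -1 ≤ t := by nlinarith [hk.1]
      interval_cases t
      · exact hk'.1 (by ring)
      · exact hk'.2.1 (by ring)
      · exact hk'.2.2 (by ring)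
    rw [if_neg hnd, mul_zero]
  rw [step1, ← Finset.sum_subset hsub hzero]
  have h1 : (-(m : ℤ)) ≠ 0 := by omega
  have h2 : (-(m : ℤ)) ≠ (m : ℤ) := by omega
  have h3 : (0 : ℤ) ≠ (m : ℤ) := by omega
  rw [Finset.sum_insert (by simp [h1, h2]), Finset.sum_insert (by simp [h3]),
    Finset.sum_singleton]
  rw [if_pos (dvd_neg.mpr dvd_rfl), if_pos (dvd_zero _), if_pos dvd_rfl]
  have e1 : Complex.exp (Complex.I * ((-(m : ℤ) : ℤ) : ℂ) * (u : ℂ)) =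
      Complex.exp (-(Complex.I * (m : ℂ) * (u : ℂ))) := by
    congr 1; push_cast; ring
  have e2 : Complex.exp (Complex.I * ((0 : ℤ) : ℂ) * (u : ℂ)) = 1 := by
    simp
  rw [e1, e2]
  field_simp
  push_cast; ring_nf
/-- If `p(x) = ∑_{k=-m}^m a_k e^{ikx}` is a trigonometric polynomial of
degree exactly `m ≥ 1` (so `a_{-m} ≠ 0` or `a_m ≠ 0`), then
`u ↦ (1/m) ∑_{j=1}^m p(2πj/m + u)` equals `a₀ + a_{-m} e^{-imu} + a_m e^{imu}`,
and in particular it is not constant. -/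
theorem stmt4 (m : ℕ) (hm : 1 ≤ m) (a : ℤ → ℂ)
    (hdeg : a (-(m : ℤ)) ≠ 0 ∨ a (m : ℤ) ≠ 0) (p : ℝ → ℂ)
    (hp : ∀ x : ℝ, p x = ∑ k ∈ Finset.Icc (-(m : ℤ)) (m : ℤ),
      a k * Complex.exp (Complex.I * (k : ℂ) * (x : ℂ))) :
    (∀ u : ℝ,
      ((m : ℂ))⁻¹ * ∑ j ∈ Finset.Icc 1 m, p (2 * Real.pi * (j : ℝ) / (m : ℝ) + u) =
        a 0 + a (-(m : ℤ)) * Complex.exp (-(Complex.I * (m : ℂ) * (u : ℂ))) +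
          a (m : ℤ) * Complex.exp (Complex.I * (m : ℂ) * (u : ℂ))) ∧
    ¬ ∃ c : ℂ, ∀ u : ℝ,
      ((m : ℂ))⁻¹ * ∑ j ∈ Finset.Icc 1 m, p (2 * Real.pi * (j : ℝ) / (m : ℝ) + u) = c := by
  have key := key_aux m hm a p hp
  refine ⟨key, ?_⟩
  rintro ⟨c, hc⟩
  have hm0 : (m : ℝ) ≠ 0 := Nat.cast_ne_zero.mpr (by omega)
  have hmC : (m : ℂ) ≠ 0 := Nat.cast_ne_zero.mpr (by omega)
  set A := a (-(m : ℤ)) with hA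
  set B := a (m : ℤ) with hB
  have f : ∀ u : ℝ, a 0 + A * Complex.exp (-(Complex.I * (m : ℂ) * (u : ℂ))) +
      B * Complex.exp (Complex.I * (m : ℂ) * (u : ℂ)) = c :=
    fun u => (key u).symm.trans (hc u)
  have E0 : a 0 + A + B = c := by
    have := f 0
    simpa using this
  have harg1 : Complex.I * (m : ℂ) * ((Real.pi / m : ℝ) : ℂ) = Real.pi * Complex.I := by
    push_cast
    field_simp
  have harg2 : Complex.I * (m : ℂ) * ((Real.pi / (2 * m) : ℝ) : ℂ) =
      (Real.pi / 2 : ℂ) * Complex.I := by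
    push_cast
    field_simp
  have E1 : a 0 - A - B = c := by
    have h := f (Real.pi / m)
    rw [harg1, Complex.exp_pi_mul_I] at h
    rw [Complex.exp_neg, Complex.exp_pi_mul_I] at h
    simp at h
    linear_combination h
  have E2 : a 0 + A * (-Complex.I) + B * Complex.I = c := by
    have h := f (Real.pi / (2 * m))
    rw [harg2] at h
    rw [Complex.exp_mul_I, Complex.exp_neg, Complex.exp_mul_I] at h
    simp only [Complex.cos_pi_div_two, Complex.sin_pi_div_two, zero_add, one_mul] at h
    rw [inv_I] at h
    linear_combination h
  have h1 : A + B = 0 := by linear_combination (E0 - E1) / 2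
  have h2 : A * (1 + Complex.I) + B * (1 - Complex.I) = 0 := by linear_combination E0 - E2
  have hB0 : B = 0 := by
    have h3 : (-2 * Complex.I) * B = 0 := by linear_combination h2 - (1 + Complex.I) * h1
    have : (-2 * Complex.I) ≠ 0 := by simp [Complex.I_ne_zero]
    exact (mul_eq_zero.mp h3).resolve_left this
  have hA0 : A = 0 := by linear_combination h1 - hB0
  rcases hdeg with h | h
  · exact h hA0
  · exact h hB0
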